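/- Let p ≥ 2, n ≥ 1 and k ≥ 1 be integers, let β* ∈ ℝ^p satisfy ‖β*‖₀ ≤ k, and let L_n : ℝ^p → ℝ be differentiable and satisfy the RSC conditions at β* with constants α₁, α₂ > 0 and τ₁, τ₂ ≥ 0. Let ρ_λ satisfy Assumption 1 with parameters λ > 0, L > 0, μ ≥ 0, and suppose (3/4)μ < α₁. Let C = {β ∈ ℝ^p : g(β) ≤ R and β ∈ Ω}, where R > 0, g : ℝ^p → ℝ is convex with g(β) ≥ ‖β‖₁ for every β, and Ω ⊆ ℝ^p is convex; assume β* ∈ C. Suppose (4/L)·max{‖∇L_n(β*)‖_∞, α₂·√((log p)/n)} ≤ λ ≤ α₂/(6RL) and n ≥ 16 R² max{τ₁², τ₂²} α₂⁻² log p. Then every stationary point β̃ ∈ C of the program min_{β ∈ C} [L_n(β) + ρ_λ(β)] satisfies ‖β̃ − β*‖₂ ≤ 6λL√k/(4α₁ − 3μ) and ‖β̃ − β*‖₁ ≤ 24λLk/(4α₁ − 3μ). -/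

import Mathlib

open Finset

noncomputable def l1 {p : ℕ} (x : Fin p → ℝ) : ℝ := ∑ i, |x i|

noncomputable def l2 {p : ℕ} (x : Fin p → ℝ) : ℝ := Real.sqrt (∑ i, (x i) ^ 2)

noncomputable def linf {p : ℕ} (x : Fin p → ℝ) : ℝ := ⨆ i, |x i|

noncomputable def l0 {p : ℕ} (x : Fin p → ℝ) : ℕ :=
  (Finset.univ.filter (fun i => x i ≠ 0)).card

noncomputable def dot {p : ℕ} (x y : Fin p → ℝ) : ℝ := ∑ i, x i * y i

noncomputable def rhoVec {p : ℕ} (ρ : ℝ → ℝ) (x : Fin p → ℝ) : ℝ := ∑ i, ρ (x i)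

/-- Assumption 1 on the regularizer `ρ_λ` with parameters `λ, L, μ`. -/
structure Assumption1 (ρ : ℝ → ℝ) (lam L mu : ℝ) : Prop where
  zero : ρ 0 = 0
  even : ∀ t : ℝ, ρ (-t) = ρ t
  mono : ∀ s t : ℝ, 0 ≤ s → s ≤ t → ρ s ≤ ρ t
  slope : ∀ s t : ℝ, 0 < s → s ≤ t → ρ t / t ≤ ρ s / s
  diff : ∀ t : ℝ, t ≠ 0 → DifferentiableAt ℝ ρ t
  deriv_lim : Filter.Tendsto (deriv ρ) (nhdsWithin 0 (Set.Ioi 0)) (nhds (lam * L))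
  conv : ConvexOn ℝ Set.univ (fun t => ρ t + (mu / 2) * t ^ 2)

/-- The restricted strong convexity (RSC) conditions at `β*`. -/
def RSC {p : ℕ} (n : ℕ) (gradLn : (Fin p → ℝ) → (Fin p → ℝ)) (bstar : Fin p → ℝ)
    (a1 a2 t1 t2 : ℝ) : Prop :=
  (∀ Δ : Fin p → ℝ, l2 Δ ≤ 1 →
    dot (gradLn (bstar + Δ) - gradLn bstar) Δ ≥
      a1 * (l2 Δ) ^ 2 - t1 * (Real.log p / n) * (l1 Δ) ^ 2) ∧
  (∀ Δ : Fin p → ℝ, 1 ≤ l2 Δ →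
    dot (gradLn (bstar + Δ) - gradLn bstar) Δ ≥
      a2 * l2 Δ - t2 * Real.sqrt (Real.log p / n) * l1 Δ)

/-- `bt` is a stationary point of `min_{β ∈ C} L_n(β) + ρ_λ(β)`. -/
def IsStationaryPt {p : ℕ} (ρ : ℝ → ℝ) (lam L mu : ℝ)
    (gradLn : (Fin p → ℝ) → (Fin p → ℝ)) (C : Set (Fin p → ℝ)) (bt : Fin p → ℝ) : Prop :=
  ∃ z : Fin p → ℝ,
    (∀ β : Fin p → ℝ, rhoVec ρ β + (mu / 2) * (l2 β) ^ 2 ≥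
        rhoVec ρ bt + (mu / 2) * (l2 bt) ^ 2 + dot z (β - bt)) ∧
    linf (z - mu • bt) ≤ lam * L ∧
    (∀ β ∈ C, dot (gradLn bt + z - mu • bt) (β - bt) ≥ 0)

open Filter Topology Set in
lemma rho_sandwich (ρ : ℝ → ℝ) (lam L mu : ℝ) (hmu : 0 ≤ mu)
    (h : Assumption1 ρ lam L mu) :
    (∀ t : ℝ, lam * L * |t| ≤ ρ t + (mu / 2) * t ^ 2) ∧ (∀ t : ℝ, ρ t ≤ lam * L * |t|) := by
  set f : ℝ → ℝ := fun t => ρ t + (mu / 2) * t ^ 2 with hfdef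
  have hconvf : ConvexOn ℝ Set.univ f := h.conv
  have hf0 : f 0 = 0 := by simp [hfdef, h.zero]
  have hfeven : ∀ t, f (-t) = f t := fun t => by simp [hfdef, h.even t]
  have hfd : ∀ s : ℝ, s ≠ 0 → HasDerivAt f (deriv ρ s + mu * s) s := by
    intro s hs
    have h1 : HasDerivAt ρ (deriv ρ s) s := (h.diff s hs).hasDerivAt
    have h2 : HasDerivAt (fun t : ℝ => (mu / 2) * t ^ 2) (mu * s) s := by
      have h3 := (hasDerivAt_pow 2 s).const_mul (mu / 2)
      refine h3.congr_deriv ?_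
      push_cast
      ring
    exact h1.add h2
  have hfnn : ∀ s : ℝ, 0 ≤ f s := by
    intro s
    have hc := h.conv.2 (Set.mem_univ s) (Set.mem_univ (-s))
      (by norm_num : (0:ℝ) ≤ 1/2) (by norm_num : (0:ℝ) ≤ 1/2) (by norm_num : (1/2:ℝ) + 1/2 = 1)
    simp only [smul_eq_mul] at hc
    have hz : (1/2:ℝ) * s + (1/2:ℝ) * -s = 0 := by ring
    rw [hz] at hc
    simp only [h.zero, h.even, neg_sq] at hc
    have : (0:ℝ) + mu / 2 * 0 ^ 2 ≤ 1 / 2 * (ρ s + mu / 2 * s ^ 2) + 1 / 2 * (ρ s + mu / 2 * s ^ 2) := hc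
    show 0 ≤ ρ s + mu / 2 * s ^ 2
    nlinarith [this]
  have hlim2 : Filter.Tendsto (fun s => deriv ρ s + mu * s) (nhdsWithin 0 (Set.Ioi 0))
      (nhds (lam * L)) := by
    have hmus : Filter.Tendsto (fun s : ℝ => mu * s) (nhdsWithin 0 (Set.Ioi 0)) (nhds 0) := by
      have hcont : Filter.Tendsto (fun s : ℝ => mu * s) (nhds (0:ℝ)) (nhds (mu * 0)) :=
        (continuous_const.mul continuous_id).tendsto 0
      simpa using hcont.mono_left nhdsWithin_le_nhds
    simpa using h.deriv_lim.add hmus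
  have hfs : Filter.Tendsto f (nhdsWithin 0 (Set.Ioi 0)) (nhds 0) := by
    apply tendsto_of_tendsto_of_tendsto_of_le_of_le' tendsto_const_nhds
      (show Filter.Tendsto (fun s : ℝ => s * f 1) (nhdsWithin 0 (Set.Ioi 0)) (nhds 0) by
        have hcont : Filter.Tendsto (fun s : ℝ => s * f 1) (nhds (0:ℝ)) (nhds (0 * f 1)) :=
          (continuous_id.mul continuous_const).tendsto 0
        simpa using hcont.mono_left nhdsWithin_le_nhds)
    · exact Filter.Eventually.of_forall fun s => hfnn s
    · filter_upwards [Ioo_mem_nhdsGT_of_mem ⟨le_refl (0:ℝ), one_pos⟩] with s hs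
      have hc := h.conv.2 (Set.mem_univ (1:ℝ)) (Set.mem_univ (0:ℝ)) hs.1.le
        (by linarith [hs.2] : (0:ℝ) ≤ 1 - s) (by ring)
      simp only [smul_eq_mul, mul_one, mul_zero, add_zero] at hc
      have hc2 : f s ≤ s * f 1 + (1 - s) * f 0 := hc
      rw [hf0] at hc2
      linarith
  have hR1pos : ∀ t : ℝ, 0 < t → lam * L * t ≤ f t := by
    intro t ht
    have hev : ∀ᶠ s in nhdsWithin 0 (Set.Ioi 0), f s + (deriv ρ s + mu * s) * (t - s) ≤ f t := by
      filter_upwards [Ioo_mem_nhdsGT_of_mem ⟨le_refl (0:ℝ), ht⟩] with s hs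
      have hsl := hconvf.le_slope_of_hasDerivAt (Set.mem_univ s) (Set.mem_univ t) hs.2
        (hfd s hs.1.ne')
      rw [slope_def_field] at hsl
      rw [le_div_iff₀ (by linarith [hs.2] : (0:ℝ) < t - s)] at hsl
      linarith
    have htend : Filter.Tendsto (fun s => f s + (deriv ρ s + mu * s) * (t - s))
        (nhdsWithin 0 (Set.Ioi 0)) (nhds (lam * L * t)) := by
      have h3 : Filter.Tendsto (fun s : ℝ => t - s) (nhdsWithin 0 (Set.Ioi 0)) (nhds t) := by
        have hcont : Filter.Tendsto (fun s : ℝ => t - s) (nhds (0:ℝ)) (nhds (t - 0)) :=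
          (continuous_const.sub continuous_id).tendsto 0
        simpa using hcont.mono_left nhdsWithin_le_nhds
      have h4 := hfs.add (hlim2.mul h3)
      simpa using h4
    exact le_of_tendsto htend hev
  constructor
  · intro t
    rcases lt_trichotomy t 0 with h1 | h1 | h1
    · have h2 := hR1pos (-t) (by linarith)
      rw [hfeven] at h2
      rw [abs_of_neg h1]
      have h3 : f t = ρ t + mu / 2 * t ^ 2 := rfl
      rw [h3] at h2
      linarith
    · simp [h1, h.zero]
    · rw [abs_of_pos h1]
      exact hR1pos t h1
  · have hpos : ∀ t : ℝ, 0 < t → ρ t ≤ lam * L * t := by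
      intro t ht
      have hev : ∀ᶠ s in nhdsWithin 0 (Set.Ioi 0), ρ t / t ≤ deriv ρ s + mu * s := by
        filter_upwards [Ioo_mem_nhdsGT_of_mem ⟨le_refl (0:ℝ), ht⟩] with s hs
        have hsl := hconvf.slope_le_of_hasDerivAt (Set.mem_univ (0:ℝ)) (Set.mem_univ s) hs.1
          (hfd s hs.1.ne')
        rw [slope_def_field, hf0] at hsl
        have h6 : f s / s ≤ deriv ρ s + mu * s := by
          have : (f s - 0) / (s - 0) = f s / s := by ring_nf
          rw [this] at hsl
          exact hsl
        have h7 := h.slope s t hs.1 hs.2.le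
        have h8 : ρ s / s = f s / s - mu / 2 * s := by
          have hfs' : f s = ρ s + mu / 2 * s ^ 2 := rfl
          rw [hfs']
          field_simp [hs.1.ne']
          ring
        have h9 : 0 ≤ mu / 2 * s := mul_nonneg (by linarith) hs.1.le
        linarith
      have hfin := ge_of_tendsto hlim2 hev
      exact (div_le_iff₀ ht).mp hfin
    intro t
    rcases lt_trichotomy t 0 with h1 | h1 | h1
    · rw [abs_of_neg h1, ← h.even t]
      exact hpos (-t) (by linarith)
    · simp [h1, h.zero]
    · rw [abs_of_pos h1]
      exact hpos t h1
set_option maxHeartbeats 1000000 in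
theorem statistical_error_bounds_for_stationary_points
    {p n k : ℕ} (hp : 2 ≤ p) (hn : 1 ≤ n) (hk : 1 ≤ k)
    (bstar : Fin p → ℝ) (hsparse : l0 bstar ≤ k)
    (Ln : (Fin p → ℝ) → ℝ) (gradLn : (Fin p → ℝ) → (Fin p → ℝ))
    (hdiff : ∀ β : Fin p → ℝ, HasFDerivAt Ln
      (∑ i, gradLn β i • (ContinuousLinearMap.proj i : (Fin p → ℝ) →L[ℝ] ℝ)) β)
    (a1 a2 t1 t2 : ℝ) (ha1 : 0 < a1) (ha2 : 0 < a2) (ht1 : 0 ≤ t1) (ht2 : 0 ≤ t2)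
    (hRSC : RSC n gradLn bstar a1 a2 t1 t2)
    (ρ : ℝ → ℝ) (lam L mu : ℝ) (hlam : 0 < lam) (hL : 0 < L) (hmu : 0 ≤ mu)
    (hA1 : Assumption1 ρ lam L mu) (hmua : (3 / 4) * mu < a1)
    (R : ℝ) (hR : 0 < R)
    (g : (Fin p → ℝ) → ℝ) (hgconv : ConvexOn ℝ Set.univ g) (hg : ∀ β, l1 β ≤ g β)
    (Ω : Set (Fin p → ℝ)) (hΩ : Convex ℝ Ω)
    (C : Set (Fin p → ℝ)) (hC : C = {β | g β ≤ R ∧ β ∈ Ω})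
    (hbstarC : bstar ∈ C)
    (hlam_lb : (4 / L) * max (linf (gradLn bstar)) (a2 * Real.sqrt (Real.log p / n)) ≤ lam)
    (hlam_ub : lam ≤ a2 / (6 * R * L))
    (hn_lb : 16 * R ^ 2 * max (t1 ^ 2) (t2 ^ 2) / a2 ^ 2 * Real.log p ≤ n)
    (bt : Fin p → ℝ) (hbtC : bt ∈ C)
    (hstat : IsStationaryPt ρ lam L mu gradLn C bt) :
    l2 (bt - bstar) ≤ 6 * lam * L * Real.sqrt k / (4 * a1 - 3 * mu) ∧
    l1 (bt - bstar) ≤ 24 * lam * L * k / (4 * a1 - 3 * mu) := by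
  obtain ⟨z, hzsub, hzinf, hzfo⟩ := hstat
  obtain ⟨hRho1, hRho2⟩ := rho_sandwich ρ lam L mu hmu hA1
  set ℓ := lam * L with hldef
  have hℓ : 0 < ℓ := mul_pos hlam hL
  clear_value ℓ
  set ν := bt - bstar with hvdef
  have hνi : ∀ i, ν i = bt i - bstar i := fun i => rfl
  clear_value ν
  set d := l2 ν with hddef
  have hd0 : 0 ≤ d := Real.sqrt_nonneg _
  clear_value d
  have hsqsum : ∀ x : Fin p → ℝ, (l2 x) ^ 2 = ∑ i, x i ^ 2 := fun x =>
    Real.sq_sqrt (Finset.sum_nonneg fun i _ => sq_nonneg _)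
  have hl1nn : ∀ x : Fin p → ℝ, 0 ≤ l1 x := fun x =>
    Finset.sum_nonneg fun i _ => abs_nonneg _
  have hp1 : (1:ℝ) < (p:ℝ) := by exact_mod_cast Nat.lt_of_lt_of_le Nat.one_lt_two hp
  have hlogp : 0 < Real.log p := Real.log_pos hp1
  have hnpos : (0:ℝ) < (n:ℝ) := by exact_mod_cast hn
  set κ := Real.log p / (n:ℝ) with hκdef
  have hκ0 : 0 ≤ κ := le_of_lt (div_pos hlogp hnpos)
  clear_value κ
  have hsκ0 : 0 ≤ Real.sqrt κ := Real.sqrt_nonneg _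
  have hk0R : (0:ℝ) ≤ (k:ℝ) := Nat.cast_nonneg k
  have hk1R : (1:ℝ) ≤ (k:ℝ) := by exact_mod_cast hk
  -- membership in C gives l1 bound
  have hl1R : ∀ β ∈ C, l1 β ≤ R := by
    intro β hβ
    rw [hC] at hβ
    exact (hg β).trans hβ.1
  have hl1ν2R : l1 ν ≤ 2 * R := by
    have h1 : l1 ν ≤ l1 bt + l1 bstar := by
      rw [l1, l1, l1, ← Finset.sum_add_distrib]
      refine Finset.sum_le_sum fun i _ => ?_
      rw [hνi]
      exact abs_sub _ _
    linarith only [h1, hl1R bt hbtC, hl1R bstar hbstarC]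
  -- lambda lower bound pieces
  have hmax : max (linf (gradLn bstar)) (a2 * Real.sqrt κ) ≤ ℓ / 4 := by
    have h1 := mul_le_mul_of_nonneg_right hlam_lb hL.le
    have h2 : 4 / L * max (linf (gradLn bstar)) (a2 * Real.sqrt κ) * L
        = 4 * max (linf (gradLn bstar)) (a2 * Real.sqrt κ) := by
      field_simp
    rw [h2] at h1
    rw [hldef]
    linarith only [h1]
  have hgradj : ∀ j, |gradLn bstar j| ≤ ℓ / 4 := by
    intro j
    have h1 : |gradLn bstar j| ≤ linf (gradLn bstar) := by
      show |gradLn bstar j| ≤ ⨆ i, |gradLn bstar i|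
      exact le_ciSup (Set.Finite.bddAbove (Set.finite_range (fun i => |gradLn bstar i|))) j
    exact h1.trans ((le_max_left _ _).trans hmax)
  have hsκℓ : a2 * Real.sqrt κ ≤ ℓ / 4 := (le_max_right _ _).trans hmax
  -- n lower bound pieces
  have hτb : ∀ τ : ℝ, 0 ≤ τ → τ ^ 2 ≤ max (t1 ^ 2) (t2 ^ 2) →
      τ * Real.sqrt κ * (4 * R) ≤ a2 := by
    intro τ hτ0 hτm
    have h2 := mul_le_mul_of_nonneg_right hn_lb (sq_nonneg a2)
    have h3 : 16 * R ^ 2 * max (t1 ^ 2) (t2 ^ 2) / a2 ^ 2 * Real.log p * a2 ^ 2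
        = 16 * R ^ 2 * max (t1 ^ 2) (t2 ^ 2) * Real.log p := by
      field_simp
    rw [h3] at h2
    have h4 : max (t1 ^ 2) (t2 ^ 2) * κ ≤ (a2 / (4 * R)) ^ 2 := by
      rw [hκdef]
      have h5 : max (t1 ^ 2) (t2 ^ 2) * (Real.log p / (n:ℝ))
          = (max (t1 ^ 2) (t2 ^ 2) * Real.log p) / (n:ℝ) := by ring
      rw [h5, div_pow, div_le_div_iff₀ hnpos (pow_pos (by linarith only [hR] : (0:ℝ) < 4 * R) 2)]
      linarith only [h2]
    have h6 : (τ * Real.sqrt κ) ^ 2 ≤ (a2 / (4 * R)) ^ 2 := by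
      rw [mul_pow, Real.sq_sqrt hκ0]
      calc τ ^ 2 * κ ≤ max (t1 ^ 2) (t2 ^ 2) * κ := mul_le_mul_of_nonneg_right hτm hκ0
        _ ≤ _ := h4
    have h7 := Real.sqrt_le_sqrt h6
    rw [Real.sqrt_sq (mul_nonneg hτ0 hsκ0),
      Real.sqrt_sq (div_nonneg ha2.le (by linarith only [hR]))] at h7
    exact (le_div_iff₀ (by linarith only [hR] : (0:ℝ) < 4 * R)).mp h7
  have ht1κ : t1 * Real.sqrt κ * (4 * R) ≤ a2 := hτb t1 ht1 (le_max_left _ _)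
  have ht2κ : t2 * Real.sqrt κ * (4 * R) ≤ a2 := hτb t2 ht2 (le_max_right _ _)
  -- lambda upper bound
  have hℓa2 : 6 * R * ℓ ≤ a2 := by
    rw [le_div_iff₀ (mul_pos (mul_pos (by norm_num : (0:ℝ) < 6) hR) hL)] at hlam_ub
    calc 6 * R * ℓ = lam * (6 * R * L) := by rw [hldef]; ring
      _ ≤ a2 := hlam_ub
  -- coordinatewise subgradient facts
  have hzb : ∀ j, |z j - mu * bt j| ≤ ℓ := by
    intro j
    have h1 : |(z - mu • bt) j| ≤ linf (z - mu • bt) := by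
      show |(z - mu • bt) j| ≤ ⨆ i, |(z - mu • bt) i|
      exact le_ciSup (Set.Finite.bddAbove (Set.finite_range (fun i => |(z - mu • bt) i|))) j
    have h2 : (z - mu • bt) j = z j - mu * bt j := by simp
    rw [h2] at h1
    exact h1.trans hzinf
  have hzsubj : ∀ j u, ρ (bt j) + mu / 2 * (bt j) ^ 2 + z j * (u - bt j)
      ≤ ρ u + mu / 2 * u ^ 2 := by
    intro j u
    have h1 := hzsub (Function.update bt j u)
    simp only [rhoVec, dot] at h1
    rw [hsqsum, hsqsum] at h1
    have e1 : ∑ i, ρ (Function.update bt j u i)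
        = ρ u + ∑ i ∈ Finset.univ.erase j, ρ (bt i) := by
      rw [← Finset.add_sum_erase _ _ (Finset.mem_univ j), Function.update_self]
      congr 1
      exact Finset.sum_congr rfl fun i hi => by
        rw [Function.update_of_ne (Finset.ne_of_mem_erase hi)]
    have e2 : ∑ i, (Function.update bt j u i) ^ 2
        = u ^ 2 + ∑ i ∈ Finset.univ.erase j, (bt i) ^ 2 := by
      rw [← Finset.add_sum_erase _ _ (Finset.mem_univ j), Function.update_self]
      congr 1
      exact Finset.sum_congr rfl fun i hi => by
        rw [Function.update_of_ne (Finset.ne_of_mem_erase hi)]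
    have e3 : ∑ i, ρ (bt i) = ρ (bt j) + ∑ i ∈ Finset.univ.erase j, ρ (bt i) :=
      (Finset.add_sum_erase _ _ (Finset.mem_univ j)).symm
    have e4 : ∑ i, (bt i) ^ 2 = (bt j) ^ 2 + ∑ i ∈ Finset.univ.erase j, (bt i) ^ 2 :=
      (Finset.add_sum_erase _ _ (Finset.mem_univ j)).symm
    have e5 : ∑ i, z i * ((Function.update bt j u - bt) i) = z j * (u - bt j) := by
      rw [← Finset.add_sum_erase _ _ (Finset.mem_univ j)]
      have h9 : ∀ i ∈ Finset.univ.erase j, z i * ((Function.update bt j u - bt) i) = 0 := by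
        intro i hi
        rw [Pi.sub_apply, Function.update_of_ne (Finset.ne_of_mem_erase hi)]
        ring
      rw [Finset.sum_eq_zero h9, add_zero, Pi.sub_apply, Function.update_self]
    rw [e1, e2, e3, e4, e5] at h1
    linarith only [h1]
  have hz0 : ∀ j, ρ (bt j) + mu / 2 * (bt j) ^ 2 ≤ z j * bt j := by
    intro j
    have h1 := hzsubj j 0
    rw [hA1.zero] at h1
    linarith only [h1]
  -- the W function
  set W : Fin p → ℝ := fun j => mu * bt j - z j with hWdef
  clear_value W
  have hWa : ∀ j, W j * ν j ≤ ℓ * |ν j| := by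
    intro j
    have h1 : |W j| ≤ ℓ := by
      have h2 : W j = -(z j - mu * bt j) := by rw [hWdef]; ring
      rw [h2, abs_neg]
      exact hzb j
    calc W j * ν j ≤ |W j * ν j| := le_abs_self _
      _ = |W j| * |ν j| := abs_mul _ _
      _ ≤ ℓ * |ν j| := mul_le_mul_of_nonneg_right h1 (abs_nonneg _)
  have hWb : ∀ j, bstar j = 0 → W j * ν j ≤ mu * (ν j) ^ 2 - ℓ * |ν j| := by
    intro j hj
    have hνj : ν j = bt j := by rw [hνi, hj, sub_zero]
    have h1 := hz0 j
    have h2 := hRho1 (bt j)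
    have h3 : W j = mu * bt j - z j := by rw [hWdef]
    rw [hνj, h3]
    linarith only [h1, h2]
  -- first order condition
  have hfo : dot (gradLn bt) ν ≤ dot W ν := by
    have h1 := hzfo bstar hbstarC
    have h2 : dot (gradLn bt) ν - dot W ν
        = -(dot (gradLn bt + z - mu • bt) (bstar - bt)) := by
      simp only [dot, hWdef, Pi.sub_apply, Pi.add_apply, Pi.smul_apply, smul_eq_mul]
      rw [← Finset.sum_sub_distrib, ← Finset.sum_neg_distrib]
      exact Finset.sum_congr rfl fun i _ => by rw [hνi]; ring
    linarith only [h1, h2.le, h2.ge]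
  have hDub : dot (gradLn bt - gradLn bstar) ν ≤ ℓ / 4 * l1 ν + dot W ν := by
    have h1 : dot (gradLn bt - gradLn bstar) ν
        = dot (gradLn bt) ν - dot (gradLn bstar) ν := by
      simp only [dot, Pi.sub_apply]
      rw [← Finset.sum_sub_distrib]
      exact Finset.sum_congr rfl fun i _ => by ring
    have h2 : -(dot (gradLn bstar) ν) ≤ ℓ / 4 * l1 ν := by
      rw [dot, l1, ← Finset.sum_neg_distrib, Finset.mul_sum]
      refine Finset.sum_le_sum fun i _ => ?_
      calc -(gradLn bstar i * ν i) ≤ |gradLn bstar i * ν i| := neg_le_abs _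
        _ = |gradLn bstar i| * |ν i| := abs_mul _ _
        _ ≤ ℓ / 4 * |ν i| := mul_le_mul_of_nonneg_right (hgradj i) (abs_nonneg _)
    linarith only [hfo, h1.le, h1.ge, h2]
  have hWck : dot W ν ≤ ℓ * l1 ν := by
    rw [dot, l1, Finset.mul_sum]
    exact Finset.sum_le_sum fun i _ => hWa i
  have hplug : bstar + ν = bt := by
    funext i
    rw [Pi.add_apply, hνi]
    ring
  -- Step: d ≤ 1
  have hd1 : d ≤ 1 := by
    by_contra hgt
    push_neg at hgt
    have hrsc2 := hRSC.2 ν (by rw [← hddef]; exact hgt.le)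
    rw [hplug, ← hκdef, ← hddef] at hrsc2
    have hch : a2 * d ≤ (5 * ℓ / 4 + t2 * Real.sqrt κ) * l1 ν := by linarith only [hrsc2, hDub, hWck]
    have hcoef : 0 ≤ 5 * ℓ / 4 + t2 * Real.sqrt κ := by
      linarith only [hℓ.le, mul_nonneg ht2 hsκ0]
    have hch2 : a2 * d ≤ (5 * ℓ / 4 + t2 * Real.sqrt κ) * (2 * R) :=
      hch.trans (mul_le_mul_of_nonneg_left hl1ν2R hcoef)
    have hfin : a2 * d ≤ 11 / 12 * a2 := by linarith only [hch2, hℓa2, ht2κ]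
    linarith only [hfin, ha2, mul_pos ha2 (show (0:ℝ) < d - 1 by linarith only [hgt])]
  -- main RSC inequality
  have hrsc1 := hRSC.1 ν (by rw [← hddef]; exact hd1)
  rw [hplug, ← hκdef, ← hddef] at hrsc1
  have hτ1 : t1 * κ * (l1 ν) ^ 2 ≤ ℓ / 8 * l1 ν := by
    have s0 : 0 ≤ Real.sqrt κ * l1 ν := mul_nonneg hsκ0 (hl1nn ν)
    have s1 : t1 * Real.sqrt κ * (4 * R) * (Real.sqrt κ * l1 ν)
        ≤ a2 * (Real.sqrt κ * l1 ν) := mul_le_mul_of_nonneg_right ht1κ s0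
    have s3 : (a2 * Real.sqrt κ) * l1 ν ≤ (ℓ / 4) * l1 ν :=
      mul_le_mul_of_nonneg_right hsκℓ (hl1nn ν)
    have s4 : Real.sqrt κ * Real.sqrt κ = κ := Real.mul_self_sqrt hκ0
    have s5 := mul_le_mul_of_nonneg_left hl1ν2R
      (mul_nonneg (mul_nonneg ht1 hκ0) (hl1nn ν))
    have s6 : t1 * κ * l1 ν * (2 * R)
        = (t1 * Real.sqrt κ * (4 * R) * (Real.sqrt κ * l1 ν)) / 2 := by
      linear_combination (-(2 * R * t1 * l1 ν)) * s4
    linarith only [s1, s3, s5, s6]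
  have hkey : a1 * d ^ 2 ≤ 3 * ℓ / 8 * l1 ν + dot W ν := by linarith only [hrsc1, hDub, hτ1]
  -- split into support and complement
  set S := Finset.univ.filter (fun i => bstar i ≠ 0) with hSdef
  set Sc := Finset.univ.filter (fun i => ¬ bstar i ≠ 0) with hScdef
  have hSc0 : ∀ i ∈ Sc, bstar i = 0 := fun i hi => not_not.mp (Finset.mem_filter.mp hi).2
  have hsplit : ∀ F : Fin p → ℝ, ∑ i, F i = ∑ i ∈ S, F i + ∑ i ∈ Sc, F i := fun F =>
    (Finset.sum_filter_add_sum_filter_not Finset.univ _ F).symm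
  set a := ∑ i ∈ S, |ν i| with hadef
  set e := ∑ i ∈ Sc, |ν i| with hedef
  have ha0 : 0 ≤ a := Finset.sum_nonneg fun i _ => abs_nonneg _
  have he0 : 0 ≤ e := Finset.sum_nonneg fun i _ => abs_nonneg _
  have hl1ae : l1 ν = a + e := by rw [hadef, hedef]; exact hsplit _
  have hd2 : d ^ 2 = ∑ i ∈ S, (ν i) ^ 2 + ∑ i ∈ Sc, (ν i) ^ 2 := by
    rw [hddef, hsqsum]
    exact hsplit _
  have hSsum0 : 0 ≤ ∑ i ∈ S, (ν i) ^ 2 := Finset.sum_nonneg fun i _ => sq_nonneg _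
  have hScsum0 : 0 ≤ ∑ i ∈ Sc, (ν i) ^ 2 := Finset.sum_nonneg fun i _ => sq_nonneg _
  have hScd : ∑ i ∈ Sc, (ν i) ^ 2 ≤ d ^ 2 := by linarith only [hd2, hSsum0]
  have hkey2 : a1 * d ^ 2 ≤ ∑ i ∈ S, (3 * ℓ / 8 * |ν i| + W i * ν i)
      + ∑ i ∈ Sc, (3 * ℓ / 8 * |ν i| + W i * ν i) := by
    have h1 : 3 * ℓ / 8 * l1 ν + dot W ν = ∑ i, (3 * ℓ / 8 * |ν i| + W i * ν i) := by
      rw [l1, dot, Finset.mul_sum, ← Finset.sum_add_distrib]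
    calc a1 * d ^ 2 ≤ ∑ i, (3 * ℓ / 8 * |ν i| + W i * ν i) := by rw [← h1]; exact hkey
      _ = _ := hsplit _
  have hSb : ∑ i ∈ S, (3 * ℓ / 8 * |ν i| + W i * ν i) ≤ 11 * ℓ / 8 * a := by
    rw [hadef, Finset.mul_sum]
    refine Finset.sum_le_sum fun i _ => ?_
    linarith only [hWa i]
  -- Cauchy-Schwarz and card bound
  have hScard : ((S.card : ℝ)) ≤ (k : ℝ) := by
    have h1 : S.card = l0 bstar := rfl
    rw [h1]
    exact_mod_cast hsparse
  clear_value S Sc a e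
  have hCS : a ^ 2 ≤ (k:ℝ) * ∑ i ∈ S, (ν i) ^ 2 := by
    have h1 := Finset.sum_mul_sq_le_sq_mul_sq S (fun _ => (1:ℝ)) (fun i => |ν i|)
    simp only [one_mul, one_pow] at h1
    rw [Finset.sum_const, nsmul_eq_mul, mul_one] at h1
    have h2 : ∑ i ∈ S, |ν i| ^ 2 = ∑ i ∈ S, (ν i) ^ 2 :=
      Finset.sum_congr rfl fun i _ => sq_abs _
    rw [h2] at h1
    calc a ^ 2 = (∑ i ∈ S, |ν i|) ^ 2 := by rw [hadef]
      _ ≤ ((S.card : ℝ)) * ∑ i ∈ S, (ν i) ^ 2 := h1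
      _ ≤ (k:ℝ) * ∑ i ∈ S, (ν i) ^ 2 := mul_le_mul_of_nonneg_right hScard hSsum0
  have hak : a ≤ Real.sqrt k * d := by
    have h1 : a ^ 2 ≤ (k:ℝ) * d ^ 2 := by
      have hd2k : (k:ℝ) * d ^ 2 = (k:ℝ) * (∑ i ∈ S, (ν i) ^ 2)
          + (k:ℝ) * (∑ i ∈ Sc, (ν i) ^ 2) := by rw [hd2]; ring
      linarith only [hCS, mul_nonneg hk0R hScsum0, hd2k]
    have h2 := Real.sqrt_le_sqrt h1
    rw [Real.sqrt_sq ha0, Real.sqrt_mul hk0R, Real.sqrt_sq hd0] at h2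
    exact h2
  have hc4 : 0 < 4 * a1 - 3 * mu := by linarith only [hmua]
  have hksq0 : 0 ≤ Real.sqrt k := Real.sqrt_nonneg _
  constructor
  · -- l2 bound
    have hSc9a : ∑ i ∈ Sc, (3 * ℓ / 8 * |ν i| + W i * ν i)
        ≤ ∑ i ∈ Sc, (3 / 4 * mu * (ν i) ^ 2) := by
      refine Finset.sum_le_sum fun i hi => ?_
      have h1 := hWa i
      have h2 := hWb i (hSc0 i hi)
      linarith only [h1, h2, mul_nonneg hmu (sq_nonneg (ν i)), abs_nonneg (ν i)]
    have hA9a : a1 * d ^ 2 ≤ 11 * ℓ / 8 * a + 3 / 4 * mu * d ^ 2 := by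
      have h1 : ∑ i ∈ Sc, (3 / 4 * mu * (ν i) ^ 2) = 3 / 4 * mu * ∑ i ∈ Sc, (ν i) ^ 2 := by
        rw [Finset.mul_sum]
      have h2 : 3 / 4 * mu * ∑ i ∈ Sc, (ν i) ^ 2 ≤ 3 / 4 * mu * d ^ 2 :=
        mul_le_mul_of_nonneg_left hScd (by linarith only [hmu])
      linarith only [hkey2, hSb, hSc9a, h1.le, h1.ge, h2]
    have hconv1 : 6 * lam * L * Real.sqrt k / (4 * a1 - 3 * mu)
        = 6 * ℓ * Real.sqrt k / (4 * a1 - 3 * mu) := by rw [hldef]; ring_nf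
    rw [hconv1, le_div_iff₀ hc4]
    rcases eq_or_lt_of_le hd0 with h0 | h0
    · rw [← h0, zero_mul]
      have : (0:ℝ) ≤ 6 * ℓ := by linarith only [hℓ.le]
      exact mul_nonneg this hksq0
    · have h1 : (a1 - 3 / 4 * mu) * d * d ≤ 11 * ℓ / 8 * Real.sqrt k * d := by
        have hx := mul_le_mul_of_nonneg_left hak (by linarith only [hℓ.le] : (0:ℝ) ≤ 11 * ℓ / 8)
        nlinarith only [hA9a, hx]
      have h2 : (a1 - 3 / 4 * mu) * d ≤ 11 * ℓ / 8 * Real.sqrt k :=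
        le_of_mul_le_mul_right h1 h0
      linarith only [h2, mul_nonneg hℓ.le hksq0]
  · -- l1 bound
    have hSc9b : ∑ i ∈ Sc, (3 * ℓ / 8 * |ν i| + W i * ν i)
        ≤ ∑ i ∈ Sc, (a1 * (ν i) ^ 2 - ℓ / 8 * |ν i|) := by
      refine Finset.sum_le_sum fun i hi => ?_
      have h1 := hWa i
      have h2 := hWb i (hSc0 i hi)
      have ht := abs_nonneg (ν i)
      have hsq : |ν i| * |ν i| = (ν i) ^ 2 := by
        rw [abs_mul_abs_self]
        ring
      rcases le_or_gt (a1 * |ν i|) (3 / 2 * ℓ) with hc | hc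
      · have p1 := mul_le_mul_of_nonneg_right hmua.le (sq_nonneg (ν i))
        have p2 := mul_le_mul_of_nonneg_right hc ht
        rw [mul_assoc a1, hsq] at p2
        linarith only [h2, p1, p2]
      · have p2 := mul_le_mul_of_nonneg_right hc.le ht
        rw [mul_assoc a1, hsq] at p2
        linarith only [h1, p2]
    have hbase : a1 * (∑ i ∈ S, (ν i) ^ 2) + ℓ / 8 * e ≤ 11 * ℓ / 8 * a := by
      have h1 : ∑ i ∈ Sc, (a1 * (ν i) ^ 2 - ℓ / 8 * |ν i|)
          = a1 * (∑ i ∈ Sc, (ν i) ^ 2) - ℓ / 8 * e := by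
        rw [Finset.sum_sub_distrib, ← Finset.mul_sum, ← Finset.mul_sum, hedef]
      have h2 := hkey2.trans (add_le_add hSb hSc9b)
      rw [h1] at h2
      have hd2' : a1 * d ^ 2 = a1 * (∑ i ∈ S, (ν i) ^ 2) + a1 * (∑ i ∈ Sc, (ν i) ^ 2) := by
        rw [hd2]
        ring
      linarith only [h2, hd2'.le, hd2'.ge]
    have hlk : (0:ℝ) < ℓ * (k:ℝ) := mul_pos hℓ (by linarith only [hk1R])
    have hl1b : a1 * (ℓ * (k:ℝ)) * (a + e) ≤ 9 / 2 * (ℓ * (k:ℝ)) ^ 2 := by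
      have h1 : a1 * a ^ 2 ≤ a1 * ((k:ℝ) * ∑ i ∈ S, (ν i) ^ 2) :=
        mul_le_mul_of_nonneg_left hCS ha1.le
      have h2 : (k:ℝ) * (a1 * (∑ i ∈ S, (ν i) ^ 2) + ℓ / 8 * e)
          ≤ (k:ℝ) * (11 * ℓ / 8 * a) := mul_le_mul_of_nonneg_left hbase hk0R
      have h3 : a1 * a ^ 2 + ℓ / 8 * (k:ℝ) * e ≤ 11 * ℓ / 8 * (k:ℝ) * a := by
        linarith only [h1, h2]
      have h4 := mul_le_mul_of_nonneg_left h3 (by linarith only [ha1] : (0:ℝ) ≤ 8 * a1)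
      linarith only [h4, sq_nonneg (3 * (ℓ * (k:ℝ)) - 4 * (a1 * a))]
    have h5 : a1 * l1 ν ≤ 9 / 2 * (ℓ * (k:ℝ)) := by
      have h6 : (ℓ * (k:ℝ)) * (a1 * l1 ν) ≤ (ℓ * (k:ℝ)) * (9 / 2 * (ℓ * (k:ℝ))) := by
        rw [hl1ae]
        linarith only [hl1b]
      exact le_of_mul_le_mul_left h6 hlk
    have hconv2 : 24 * lam * L * (k:ℝ) / (4 * a1 - 3 * mu)
        = 24 * ℓ * (k:ℝ) / (4 * a1 - 3 * mu) := by rw [hldef]; ring_nf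
    rw [hconv2, le_div_iff₀ hc4]
    linarith only [h5, mul_nonneg (hl1nn ν) hmu, hlk.le]
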